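/- Let N ≥ 2 be an integer and let 0 < λ < N−1. Then lim_{p→1^+} [ (1 − λ/(N−1)) / (1 − λ (p/(N−p))^p) − 1 ] · p/(p−1) = λ (N/(N−1) − log(N−1)) / (N−1−λ). -/

import Mathlib

open Real Filter Set

/-- For `0 < λ < N-1`,
`lim_{p→1⁺} [ (1 - λ/(N-1)) / (1 - λ (p/(N-p))^p) - 1 ] · p/(p-1)
  = λ (N/(N-1) - log(N-1)) / (N-1-λ)`. -/
theorem limit_ratio_minus_one (N : ℕ) (hN : 2 ≤ N) (l : ℝ) (hl0 : 0 < l) (hl : l < N - 1) :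
    Filter.Tendsto
      (fun p : ℝ => ((1 - l / (N - 1)) / (1 - l * (p / (N - p)) ^ p) - 1) * (p / (p - 1)))
      (nhdsWithin 1 (Set.Ioi 1))
      (nhds (l * (N / (N - 1) - Real.log (N - 1)) / (N - 1 - l))) := by
  have hN2 : (2:ℝ) ≤ N := by exact_mod_cast hN
  set c : ℝ := (N:ℝ) with hcdef
  have hc1 : (0:ℝ) < c - 1 := by simp only [hcdef]; linarith
  set F : ℝ → ℝ := fun p => (p / (c - p)) ^ p with hFdef
  have hF1 : F 1 = 1 / (c - 1) := by simp [hFdef]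
  set D : ℝ := c / (c - 1) ^ 2 - Real.log (c - 1) / (c - 1) with hD
  -- derivative of F at 1
  have hb : HasDerivAt (fun p : ℝ => p / (c - p))
      ((1 * (c - 1) - 1 * (0 - 1)) / (c - 1) ^ 2) 1 := by
    exact (hasDerivAt_id 1).div ((hasDerivAt_const 1 c).sub (hasDerivAt_id 1))
      (by simpa using hc1.ne')
  have hF : HasDerivAt F D 1 := by
    have h1 : (0:ℝ) < (1:ℝ) / (c - 1) := by positivity
    have := hb.rpow (hasDerivAt_id 1) (by simpa using h1)
    convert this using 1
    case e'_8 => rfl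
    simp only [id_eq, sub_self, Real.rpow_zero, Real.rpow_one]
    rw [Real.log_div one_ne_zero hc1.ne', Real.log_one]
    rw [hD]
    field_simp
    ring
  -- slope tendsto
  have hslope : Tendsto (fun p => (F p - F 1) / (p - 1)) (nhdsWithin 1 (Set.Ioi 1)) (nhds D) := by
    have := (hasDerivAt_iff_tendsto_slope.mp hF).mono_left
      (nhdsWithin_mono 1 (fun x hx => ne_of_gt hx : Set.Ioi 1 ⊆ {(1:ℝ)}ᶜ))
    refine this.congr fun p => ?_
    simp [slope_def_field]
  set G : ℝ → ℝ := fun p => 1 - l * F p with hGdef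
  have hG1 : G 1 = (c - 1 - l) / (c - 1) := by
    simp only [hGdef, hF1]; field_simp
  have hG1pos : 0 < G 1 := by
    rw [hG1]; apply div_pos _ hc1
    have : l < c - 1 := hl
    linarith
  have hGcont : ContinuousAt G 1 :=
    (continuousAt_const.sub (continuousAt_const.mul hF.continuousAt))
  have hdiv : Tendsto (fun p => p / G p) (nhdsWithin 1 (Set.Ioi 1)) (nhds (1 / G 1)) :=
    (continuousAt_id.div hGcont hG1pos.ne').tendsto.mono_left nhdsWithin_le_nhds
  have hGne : ∀ᶠ p in nhdsWithin 1 (Set.Ioi 1), G p ≠ 0 :=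
    (hGcont.eventually_ne hG1pos.ne').filter_mono nhdsWithin_le_nhds
  have key : Tendsto (fun p => l * ((F p - F 1) / (p - 1)) * (p / G p))
      (nhdsWithin 1 (Set.Ioi 1)) (nhds (l * D * (1 / G 1))) :=
    ((tendsto_const_nhds.mul hslope).mul hdiv)
  have heq : ∀ᶠ p in nhdsWithin 1 (Set.Ioi 1),
      l * ((F p - F 1) / (p - 1)) * (p / G p)
        = ((1 - l / (c - 1)) / (1 - l * (p / (c - p)) ^ p) - 1) * (p / (p - 1)) := by
    filter_upwards [hGne, self_mem_nhdsWithin] with p hGp hp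
    have hp1 : p - 1 ≠ 0 := sub_ne_zero.mpr (ne_of_gt hp)
    have hFp : (1:ℝ) - l * (p / (c - p)) ^ p = G p := rfl
    rw [hFp]
    have h1 : (1:ℝ) - l / (c - 1) = G 1 := by rw [hG1]; field_simp
    rw [h1, hG1, hF1]
    field_simp
    ring
  have final : Tendsto
      (fun p : ℝ => ((1 - l / (c - 1)) / (1 - l * (p / (c - p)) ^ p) - 1) * (p / (p - 1)))
      (nhdsWithin 1 (Set.Ioi 1)) (nhds (l * D * (1 / G 1))) :=
    key.congr' heq
  have hval : l * D * (1 / G 1) = l * (c / (c - 1) - Real.log (c - 1)) / (c - 1 - l) := by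
    rw [hG1, hD]
    have hcl : c - 1 - l ≠ 0 := by have : l < c - 1 := hl; intro h; linarith [sub_eq_zero.mp h]
    field_simp
  rw [hval] at final
  exact final
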